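/- arXiv:1503.01600 — 6 statements merged into one kernel-verified Lean document; each statement's English description precedes it below -/
import Mathlib

section
/- For all real x ≥ 1 and λ > 0, one has 1 - e^{-λx} - λx e^{-λx} ≤ x²(1 - e^{-λ} - λ e^{-λ}). -/
open Real

theorem stmt1 (x l : ℝ) (hx : 1 ≤ x) (hl : 0 < l) :
    1 - Real.exp (-(l * x)) - l * x * Real.exp (-(l * x)) ≤
      x ^ 2 * (1 - Real.exp (-l) - l * Real.exp (-l)) := by
  set C : ℝ := 1 - Real.exp (-l) - l * Real.exp (-l) with hC
  set g : ℝ → ℝ := fun y => y ^ 2 * C - (1 - Real.exp (-(l * y)) - l * y * Real.exp (-(l * y))) with hg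
  have hderiv : ∀ y : ℝ, HasDerivAt g (2 * y * C - l ^ 2 * y * Real.exp (-(l * y))) y := by
    intro y
    have h1 : HasDerivAt (fun y : ℝ => -(l * y)) (-l) y := by
      exact ((hasDerivAt_id' y).const_mul l).neg.congr_deriv (by ring)
    have he : HasDerivAt (fun y : ℝ => Real.exp (-(l * y)))
        (Real.exp (-(l * y)) * (-l)) y := (Real.hasDerivAt_exp _).comp y h1
    have hly : HasDerivAt (fun y : ℝ => l * y) l y := by
      simpa using (hasDerivAt_id y).const_mul l
    have hmul : HasDerivAt (fun y : ℝ => l * y * Real.exp (-(l * y)))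
        (l * Real.exp (-(l * y)) + l * y * (Real.exp (-(l * y)) * (-l))) y := hly.mul he
    have hsq : HasDerivAt (fun y : ℝ => y ^ 2 * C) (2 * y * C) y := by
      simpa [mul_comm] using ((hasDerivAt_pow 2 y).mul_const C)
    have := hsq.sub (((hasDerivAt_const y (1:ℝ)).sub he).sub hmul)
    exact this.congr_deriv (by ring)
  have key : g 1 ≤ g x := by
    have hmono : MonotoneOn g (Set.Ici 1) := by
      apply monotoneOn_of_deriv_nonneg (convex_Ici 1)
      · exact Continuous.continuousOn (by fun_prop)
      · intro y hy
        exact (hderiv y).differentiableAt.differentiableWithinAt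
      · intro y hy
        rw [interior_Ici] at hy
        rw [(hderiv y).deriv]
        have hy1 : (1:ℝ) < y := hy
        have hCl : l ^ 2 * Real.exp (-l) ≤ 2 * C := by
          have hq := Real.quadratic_le_exp_of_nonneg hl.le
          have hexp : Real.exp (-l) = 1 / Real.exp l := by
            rw [Real.exp_neg]; ring
          have hpos : 0 < Real.exp l := Real.exp_pos l
          rw [hC, hexp]
          have hu : 0 < 1 / Real.exp l := one_div_pos.mpr hpos
          have hmul := mul_le_mul_of_nonneg_right hq hu.le
          have hcanc : Real.exp l * (1 / Real.exp l) = 1 := by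
            field_simp
          nlinarith
        have hee : Real.exp (-(l * y)) ≤ Real.exp (-l) := by
          apply Real.exp_le_exp.mpr
          nlinarith
        have : l ^ 2 * y * Real.exp (-(l * y)) ≤ 2 * y * C := by
          have h1 : l ^ 2 * Real.exp (-(l * y)) ≤ 2 * C :=
            le_trans (by nlinarith [sq_nonneg l]) hCl
          nlinarith
        linarith
    exact hmono (by norm_num) (Set.mem_Ici.mpr hx) hx
  have hg1 : g 1 = 0 := by simp [hg, hC]
  have := key
  rw [hg1] at this
  simp only [hg] at this
  linarith
end

section
/- Let φ be a Bernstein function with representation φ(λ) = a + bλ + ∫_{(0,∞)} (1 - e^{-λt}) μ(dt), and define H(λ) := φ(λ) - λφ'(λ). Then H(λx) ≤ x²·H(λ) for all λ > 0 and x ≥ 1. -/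
open MeasureTheory Set Real


/-- nonnegativity of the kernel -/
lemma myK_nonneg {s : ℝ} (hs : 0 ≤ s) : 0 ≤ 1 - exp (-s) - s * exp (-s) := by
  have h1 : s + 1 ≤ exp s := Real.add_one_le_exp s
  have h2 : exp (-s) * exp s = 1 := by rw [← Real.exp_add]; simp
  have h3 : 0 < exp (-s) := Real.exp_pos _
  nlinarith

/-- key inequality 2K(s) ≥ s² e^{-s} -/
lemma myK_key {s : ℝ} (hs : 0 ≤ s) : s ^ 2 * exp (-s) ≤ 2 * (1 - exp (-s) - s * exp (-s)) := by
  have h1 : 1 + s + s ^ 2 / 2 ≤ exp s := Real.quadratic_le_exp_of_nonneg hs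
  have h2 : exp (-s) * exp s = 1 := by rw [← Real.exp_add]; simp
  have h3 : 0 < exp (-s) := Real.exp_pos _
  nlinarith

/-- derivative of the kernel in the scaling variable -/
lemma myK_hasDeriv (s : ℝ) (y : ℝ) :
    HasDerivAt (fun y : ℝ => 1 - exp (-(s * y)) - s * y * exp (-(s * y)))
      (s ^ 2 * y * exp (-(s * y))) y := by
  have h1 : HasDerivAt (fun y : ℝ => -(s * y)) (-s) y := by
    have h := ((hasDerivAt_id y).const_mul s).neg; simp only [id, mul_one] at h; exact h
  have h2 : HasDerivAt (fun y : ℝ => exp (-(s * y))) (exp (-(s * y)) * (-s)) y := h1.exp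
  have h3 : HasDerivAt (fun y : ℝ => 1 - exp (-(s * y))) (-(exp (-(s * y)) * (-s))) y :=
    h2.const_sub 1
  have h4 : HasDerivAt (fun y : ℝ => s * y * exp (-(s * y)))
      (s * exp (-(s * y)) + s * y * (exp (-(s * y)) * (-s))) y := by
    have h := (((hasDerivAt_id y).const_mul s).mul h2); simp only [id, mul_one] at h; exact h
  have := h3.sub h4
  exact this.congr_deriv (by ring)

/-- the pointwise inequality -/
lemma myK_pointwise {s x : ℝ} (hs : 0 ≤ s) (hx : 1 ≤ x) :
    1 - exp (-(s * x)) - s * x * exp (-(s * x)) ≤ x ^ 2 * (1 - exp (-s) - s * exp (-s)) := by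
  set K1 : ℝ := 1 - exp (-s) - s * exp (-s) with hK1
  set g : ℝ → ℝ := fun y => y ^ 2 * K1 - (1 - exp (-(s * y)) - s * y * exp (-(s * y)))
  have hg : ∀ y : ℝ, HasDerivAt g (2 * y * K1 - s ^ 2 * y * exp (-(s * y))) y := by
    intro y
    have h1 : HasDerivAt (fun y : ℝ => y ^ 2 * K1) (2 * y * K1) y := by
      simpa [mul_comm] using (hasDerivAt_pow 2 y).mul_const K1
    exact h1.sub (myK_hasDeriv s y)
  have hmono : MonotoneOn g (Ici 1) := by
    apply monotoneOn_of_deriv_nonneg (convex_Ici 1)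
      (fun y _ => ((hg y).differentiableAt.continuousAt.continuousWithinAt))
      (fun y _ => ((hg y).differentiableAt.differentiableWithinAt))
    intro y hy
    rw [interior_Ici] at hy
    rw [(hg y).deriv]
    have hy1 : (1:ℝ) ≤ y := le_of_lt hy
    have hb : s ^ 2 * exp (-(s * y)) ≤ 2 * K1 := by
      calc s ^ 2 * exp (-(s * y)) ≤ s ^ 2 * exp (-s) := by
            apply mul_le_mul_of_nonneg_left _ (sq_nonneg s)
            apply Real.exp_le_exp.2
            nlinarith
        _ ≤ 2 * K1 := myK_key hs
    nlinarith [mul_le_mul_of_nonneg_left hb (le_trans zero_le_one hy1)]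
  have h1 : g 1 ≤ g x := hmono (by norm_num) hx hx
  have hg1 : g 1 = 0 := by simp [g, hK1]
  have := hg1 ▸ h1
  simp only [g] at this
  linarith


lemma my_int_min (μ : Measure ℝ)
    (hμ : ∫⁻ t in Ioi (0:ℝ), ENNReal.ofReal (min 1 t) ∂μ < ⊤) :
    IntegrableOn (fun t => min 1 t) (Ioi (0:ℝ)) μ := by
  refine ⟨(continuous_const.min continuous_id).aestronglyMeasurable, ?_⟩
  rw [hasFiniteIntegral_iff_ofReal ?pos]
  · exact hμ
  case pos =>
    filter_upwards [ae_restrict_mem measurableSet_Ioi] with t ht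
    exact le_min zero_le_one (le_of_lt ht)

lemma my_int_dom (μ : Measure ℝ)
    (hμ : ∫⁻ t in Ioi (0:ℝ), ENNReal.ofReal (min 1 t) ∂μ < ⊤)
    {f : ℝ → ℝ} (C : ℝ) (hf : Continuous f)
    (h : ∀ t ∈ Ioi (0:ℝ), ‖f t‖ ≤ C * min 1 t) :
    IntegrableOn f (Ioi (0:ℝ)) μ := by
  apply Integrable.mono' ((my_int_min μ hμ).const_mul C) hf.aestronglyMeasurable
  rw [ae_restrict_iff' measurableSet_Ioi]
  exact ae_of_all _ h

lemma my_exp_le {c t : ℝ} (hc : 0 < c) (ht : 0 ≤ t) : 1 - exp (-(c * t)) ≤ c * t := by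
  nlinarith [Real.add_one_le_exp (-(c*t))]

lemma my_int1 (μ : Measure ℝ)
    (hμ : ∫⁻ t in Ioi (0:ℝ), ENNReal.ofReal (min 1 t) ∂μ < ⊤)
    {c : ℝ} (hc : 0 < c) :
    IntegrableOn (fun t => 1 - exp (-(c * t))) (Ioi (0:ℝ)) μ := by
  apply my_int_dom μ hμ (max 1 c)
  · continuity
  · intro t ht
    have ht' : (0:ℝ) < t := ht
    have h0 : 0 ≤ 1 - exp (-(c * t)) := by
      simp only [sub_nonneg, Real.exp_le_one_iff]
      nlinarith
    rw [Real.norm_eq_abs, abs_of_nonneg h0]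
    rcases le_total t 1 with h | h
    · have : min 1 t = t := min_eq_right h
      rw [this]
      calc 1 - exp (-(c*t)) ≤ c * t := my_exp_le hc ht'.le
        _ ≤ max 1 c * t := by nlinarith [le_max_right 1 c]
    · have : min 1 t = 1 := min_eq_left h
      rw [this, mul_one]
      calc 1 - exp (-(c*t)) ≤ 1 := by nlinarith [Real.exp_pos (-(c*t))]
        _ ≤ max 1 c := le_max_left 1 c

lemma my_texp_bound {c t : ℝ} (hc : 0 < c) (ht : 0 < t) :
    t * exp (-(c * t)) ≤ max 1 (2 / c ^ 2) * min 1 t := by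
  have he : 0 < exp (-(c*t)) := Real.exp_pos _
  have he1 : exp (-(c*t)) ≤ 1 := by rw [Real.exp_le_one_iff]; nlinarith
  rcases le_total t 1 with h | h
  · have : min 1 t = t := min_eq_right h
    rw [this]
    calc t * exp (-(c*t)) ≤ t * 1 := by nlinarith
      _ ≤ max 1 (2 / c ^ 2) * t := by nlinarith [le_max_left 1 (2 / c ^ 2)]
  · have : min 1 t = 1 := min_eq_left h
    rw [this, mul_one]
    have hq : 1 + c*t + (c*t) ^ 2 / 2 ≤ exp (c*t) := Real.quadratic_le_exp_of_nonneg (by positivity)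
    have h2 : exp (-(c*t)) * exp (c*t) = 1 := by rw [← Real.exp_add]; simp
    have hle : t * exp (-(c*t)) ≤ 2 / c ^ 2 := by
      rw [le_div_iff₀ (by positivity : (0:ℝ) < c ^ 2)]
      have h3 : exp (-(c*t)) * ((c*t)^2 / 2) ≤ 1 := by
        nlinarith [mul_le_mul_of_nonneg_left hq he.le, mul_pos he (mul_pos hc ht)]
      have h4 : t * exp (-(c*t)) * c^2 ≤ t^2 * exp (-(c*t)) * c^2 := by
        nlinarith [mul_nonneg (mul_nonneg (mul_nonneg (sub_nonneg.2 h) ht.le) he.le) (sq_nonneg c)]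
      nlinarith
    exact hle.trans (le_max_right _ _)

lemma my_int2 (μ : Measure ℝ)
    (hμ : ∫⁻ t in Ioi (0:ℝ), ENNReal.ofReal (min 1 t) ∂μ < ⊤)
    {c : ℝ} (hc : 0 < c) :
    IntegrableOn (fun t => t * exp (-(c * t))) (Ioi (0:ℝ)) μ := by
  apply my_int_dom μ hμ (max 1 (2 / c ^ 2))
  · continuity
  · intro t ht
    have ht' : (0:ℝ) < t := ht
    rw [Real.norm_eq_abs, abs_of_nonneg (by positivity)]
    exact my_texp_bound hc ht'

lemma my_int3 (μ : Measure ℝ)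
    (hμ : ∫⁻ t in Ioi (0:ℝ), ENNReal.ofReal (min 1 t) ∂μ < ⊤)
    {c : ℝ} (hc : 0 < c) :
    IntegrableOn (fun t => 1 - exp (-(c * t)) - c * t * exp (-(c * t))) (Ioi (0:ℝ)) μ := by
  have heq : (fun t : ℝ => 1 - exp (-(c * t)) - c * t * exp (-(c * t)))
      = fun t : ℝ => (1 - exp (-(c * t))) - c * (t * exp (-(c * t))) := by
    funext t; ring
  rw [heq]
  exact (my_int1 μ hμ hc).sub ((my_int2 μ hμ hc).const_mul c)

lemma my_hasDeriv (μ : Measure ℝ)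
    (hμ : ∫⁻ t in Ioi (0:ℝ), ENNReal.ofReal (min 1 t) ∂μ < ⊤)
    {l : ℝ} (hl : 0 < l) :
    HasDerivAt (fun x => ∫ t in Ioi (0:ℝ), (1 - exp (-(x * t))) ∂μ)
      (∫ t in Ioi (0:ℝ), t * exp (-(l * t)) ∂μ) l := by
  have hmeas : ∀ x : ℝ, AEStronglyMeasurable (fun t => 1 - exp (-(x * t)))
      (μ.restrict (Ioi 0)) := fun x => (by continuity : Continuous fun t : ℝ =>
        1 - exp (-(x * t))).aestronglyMeasurable
  have h := hasDerivAt_integral_of_dominated_loc_of_deriv_le (s := Metric.ball l (l / 2))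
    (F := fun x t => 1 - exp (-(x * t))) (F' := fun x t => t * exp (-(x * t)))
    (x₀ := l) (bound := fun t => t * exp (-(l / 2 * t)))
    (Metric.ball_mem_nhds l (by positivity))
    (Filter.Eventually.of_forall hmeas)
    (my_int1 μ hμ hl)
    ((by continuity : Continuous fun t : ℝ => t * exp (-(l * t))).aestronglyMeasurable)
    ?_ (my_int2 μ hμ (by positivity)) ?_
  · exact h.2
  · filter_upwards [ae_restrict_mem measurableSet_Ioi] with t ht x hx
    have ht' : (0:ℝ) < t := ht
    rw [Metric.mem_ball, Real.dist_eq] at hx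
    have hx2 : l / 2 ≤ x := by cases abs_lt.1 hx; linarith
    rw [Real.norm_eq_abs, abs_of_nonneg (by positivity)]
    have : exp (-(x * t)) ≤ exp (-(l / 2 * t)) := by
      apply Real.exp_le_exp.2; nlinarith
    nlinarith
  · filter_upwards [ae_restrict_mem measurableSet_Ioi] with t ht x hx
    have h1 : HasDerivAt (fun x : ℝ => -(x * t)) (-t) x := by
      have h := ((hasDerivAt_id x).mul_const t).neg; simp only [id, one_mul] at h; exact h
    have h2 := (h1.exp).const_sub 1
    convert h2 using 1
    ring

theorem stmt3 (μ : Measure ℝ)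
    (hμ : ∫⁻ t in Ioi (0:ℝ), ENNReal.ofReal (min 1 t) ∂μ < ⊤)
    (a b : ℝ) (ha : 0 ≤ a) (hb : 0 ≤ b)
    (φ H : ℝ → ℝ)
    (hφ : ∀ l > 0, φ l = a + b * l + ∫ t in Ioi (0:ℝ), (1 - exp (-(l * t))) ∂μ)
    (hH : ∀ l > 0, H l = φ l - l * deriv φ l) :
    ∀ l > 0, ∀ x ≥ 1, H (l * x) ≤ x ^ 2 * H l := by
  have hderivφ : ∀ l > 0, deriv φ l = b + ∫ t in Ioi (0:ℝ), t * exp (-(l * t)) ∂μ := by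
    intro l hl
    have hev : φ =ᶠ[nhds l] fun y => a + b * y + ∫ t in Ioi (0:ℝ), (1 - exp (-(y * t))) ∂μ := by
      filter_upwards [Ioi_mem_nhds hl] with y hy
      exact hφ y hy
    rw [hev.deriv_eq]
    have h1 : HasDerivAt (fun y : ℝ => a + b * y) b l := by
      have h := (hasDerivAt_const l a).add ((hasDerivAt_id l).const_mul b); simp only [id, mul_one, zero_add] at h; exact h
    exact (h1.add (my_hasDeriv μ hμ hl)).deriv
  have hHf : ∀ l > 0, H l =
      a + ∫ t in Ioi (0:ℝ), (1 - exp (-(l * t)) - l * t * exp (-(l * t))) ∂μ := by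
    intro l hl
    rw [hH l hl, hφ l hl, hderivφ l hl]
    have hsplit : ∫ t in Ioi (0:ℝ), (1 - exp (-(l * t)) - l * t * exp (-(l * t))) ∂μ
        = (∫ t in Ioi (0:ℝ), (1 - exp (-(l * t))) ∂μ)
          - ∫ t in Ioi (0:ℝ), l * (t * exp (-(l * t))) ∂μ := by
      rw [← integral_sub (my_int1 μ hμ hl) ((my_int2 μ hμ hl).const_mul l)]
      congr 1
      funext t
      ring
    rw [hsplit, MeasureTheory.integral_const_mul]
    ring
  intro l hl x hx
  have hx0 : (0:ℝ) < x := lt_of_lt_of_le one_pos hx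
  have hlx : 0 < l * x := by positivity
  rw [hHf (l * x) hlx, hHf l hl]
  have hmono : ∫ t in Ioi (0:ℝ), (1 - exp (-(l * x * t)) - l * x * t * exp (-(l * x * t))) ∂μ
      ≤ ∫ t in Ioi (0:ℝ), x ^ 2 * (1 - exp (-(l * t)) - l * t * exp (-(l * t))) ∂μ := by
    apply integral_mono_ae (my_int3 μ hμ hlx) ((my_int3 μ hμ hl).const_mul (x ^ 2))
    filter_upwards [ae_restrict_mem measurableSet_Ioi] with t ht
    have ht' : (0:ℝ) < t := ht
    have hs : 0 ≤ l * t := by positivity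
    have := myK_pointwise hs hx
    rw [show l * x * t = l * t * x from by ring]
    exact this
  rw [MeasureTheory.integral_const_mul] at hmono
  have hx2 : (1:ℝ) ≤ x ^ 2 := by nlinarith
  nlinarith [hmono, mul_nonneg ha (sub_nonneg.2 hx2)]
end

section
/- Let φ be a Bernstein function with zero killing and zero drift, φ(λ) = ∫_{(0,∞)}(1 - e^{-λt}) μ(dt), and H(λ) = φ(λ) - λφ'(λ). If there exist C_U > 0, δ > 0, λ_U ≥ 0 with H(λx)/H(λ) ≤ C_U x^δ for all λ > λ_U and x ≥ 1, then φ(λx)/φ(λ) ≤ C_U x^δ for all λ > λ_U and x ≥ 1. -/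
open MeasureTheory Set Real Filter Topology

set_option maxHeartbeats 1000000

noncomputable def Gb (u : ℝ) : ℝ := 1 - exp (-u) - u * exp (-u)

lemma Gb_nonneg {u : ℝ} (hu : 0 ≤ u) : 0 ≤ Gb u := by
  unfold Gb
  have h1 : exp (-u) * exp u = 1 := by rw [← exp_add]; simp
  have h2 : 1 + u ≤ exp u := by linarith [add_one_le_exp u]
  have h3 : (0:ℝ) < exp (-u) := exp_pos _
  nlinarith [mul_le_mul_of_nonneg_left h2 h3.le]

lemma Gb_le_min {u : ℝ} (hu : 0 ≤ u) : Gb u ≤ min 1 u := by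
  unfold Gb
  have h1 : exp (-u) ≤ 1 := exp_le_one_iff.mpr (by linarith)
  have h2 : 1 - u ≤ exp (-u) := by linarith [add_one_le_exp (-u)]
  have h3 : 0 ≤ u * exp (-u) := mul_nonneg hu (exp_pos _).le
  exact le_min (by linarith [exp_pos (-u)]) (by linarith)

lemma one_sub_exp_nonneg {u : ℝ} (hu : 0 ≤ u) : 0 ≤ 1 - exp (-u) := by
  have h1 : exp (-u) ≤ 1 := exp_le_one_iff.mpr (by linarith)
  linarith

lemma one_sub_exp_le_min {u : ℝ} (hu : 0 ≤ u) : 1 - exp (-u) ≤ min 1 u := by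
  have h2 : 1 - u ≤ exp (-u) := by linarith [add_one_le_exp (-u)]
  exact le_min (by linarith [exp_pos (-u)]) (by linarith)

lemma min_mul_bound {l t : ℝ} (hl : 0 ≤ l) (ht : 0 < t) : min 1 (l*t) ≤ max 1 l * min 1 t := by
  rcases le_total t 1 with h | h
  · rw [min_eq_right h]
    calc min 1 (l*t) ≤ l*t := min_le_right _ _
    _ ≤ max 1 l * t := by nlinarith [le_max_right 1 l]
  · rw [min_eq_left h]
    calc min 1 (l*t) ≤ 1 := min_le_left _ _
    _ = 1 * 1 := by ring
    _ ≤ max 1 l * 1 := by nlinarith [le_max_left 1 l]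

lemma Gb_cont : Continuous Gb := by
  unfold Gb; continuity

lemma texp_bound {c t : ℝ} (hc : 0 < c) (ht : 0 < t) :
    t * exp (-(c*t)) ≤ max 1 c⁻¹ * min 1 t := by
  rcases le_total t 1 with h | h
  · rw [min_eq_right h]
    have h1 : exp (-(c*t)) ≤ 1 := exp_le_one_iff.mpr (by nlinarith)
    nlinarith [le_max_left 1 c⁻¹]
  · rw [min_eq_left h]
    have key : (c*t) * exp (-(c*t)) ≤ 1 := by
      set u := c*t with hu
      have h1 : exp (-u) * exp u = 1 := by rw [← exp_add]; simp
      have h2 : u + 1 ≤ exp u := add_one_le_exp u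
      have h3 : (0:ℝ) < exp (-u) := exp_pos _
      nlinarith [mul_le_mul_of_nonneg_left h2 h3.le]
    have : t * exp (-(c*t)) ≤ c⁻¹ := by
      rw [← mul_le_mul_iff_right₀ hc]
      calc c * (t * exp (-(c*t))) = (c*t) * exp (-(c*t)) := by ring
        _ ≤ 1 := key
        _ = c * c⁻¹ := by field_simp
    calc t * exp (-(c*t)) ≤ c⁻¹ := this
      _ ≤ max 1 c⁻¹ := le_max_right _ _
      _ = max 1 c⁻¹ * 1 := by ring

-- integrability criterion
lemma integrableOn_of_le_min (μ : Measure ℝ)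
    (hμ : ∫⁻ t in Ioi (0:ℝ), ENNReal.ofReal (min 1 t) ∂μ < ⊤)
    {k : ℝ → ℝ} (hk : AEStronglyMeasurable k (μ.restrict (Ioi 0))) {K : ℝ} (hK : 0 ≤ K)
    (hbd : ∀ t ∈ Ioi (0:ℝ), ‖k t‖ ≤ K * min 1 t) :
    IntegrableOn k (Ioi 0) μ := by
  refine ⟨hk, ?_⟩
  rw [hasFiniteIntegral_iff_norm]
  calc ∫⁻ t, ENNReal.ofReal ‖k t‖ ∂(μ.restrict (Ioi 0))
      ≤ ∫⁻ t, ENNReal.ofReal K * ENNReal.ofReal (min 1 t) ∂(μ.restrict (Ioi 0)) := by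
        apply lintegral_mono_ae
        filter_upwards [ae_restrict_mem measurableSet_Ioi] with t ht
        rw [← ENNReal.ofReal_mul hK]
        exact ENNReal.ofReal_le_ofReal (hbd t ht)
    _ = ENNReal.ofReal K * ∫⁻ t in Ioi (0:ℝ), ENNReal.ofReal (min 1 t) ∂μ :=
        lintegral_const_mul' _ _ ENNReal.ofReal_ne_top
    _ < ⊤ := ENNReal.mul_lt_top ENNReal.ofReal_lt_top hμ

lemma sf (μ : Measure ℝ)
    (hμ : ∫⁻ t in Ioi (0:ℝ), ENNReal.ofReal (min 1 t) ∂μ < ⊤) :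
    SigmaFinite (μ.restrict (Ioi 0)) := by
  apply Measure.sigmaFinite_of_countable (countable_range
    (fun n : ℕ => Iic (0:ℝ) ∪ Ici (((n:ℝ)+1)⁻¹)))
  · rintro s ⟨n, rfl⟩
    have hε : (0:ℝ) < ((n:ℝ)+1)⁻¹ := by positivity
    have hε1 : ((n:ℝ)+1)⁻¹ ≤ 1 := by
      rw [inv_le_one_iff₀]; right; linarith [Nat.cast_nonneg (α := ℝ) n]
    have h0 : μ.restrict (Ioi 0) (Iic 0) = 0 := by
      rw [Measure.restrict_apply measurableSet_Iic]
      convert measure_empty (μ := μ)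
      ext x; simp only [mem_inter_iff, mem_Iic, mem_Ioi, mem_empty_iff_false, iff_false]
      intro ⟨h1, h2⟩; linarith
    have hfin : μ.restrict (Ioi 0) (Ici (((n:ℝ)+1)⁻¹)) < ⊤ := by
      set ε := ((n:ℝ)+1)⁻¹
      by_contra htop
      push_neg at htop
      have he : μ.restrict (Ioi 0) (Ici ε) = ⊤ := top_le_iff.mp htop
      have : ENNReal.ofReal ε * μ.restrict (Ioi 0) (Ici ε)
          ≤ ∫⁻ t in Ioi (0:ℝ), ENNReal.ofReal (min 1 t) ∂μ := by
        calc ENNReal.ofReal ε * μ.restrict (Ioi 0) (Ici ε)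
            = ∫⁻ t in Ici ε, ENNReal.ofReal ε ∂(μ.restrict (Ioi 0)) := by
              rw [setLIntegral_const, mul_comm]
          _ ≤ ∫⁻ t in Ici ε, ENNReal.ofReal (min 1 t) ∂(μ.restrict (Ioi 0)) := by
              apply setLIntegral_mono (measurable_const.min measurable_id).ennreal_ofReal
              intro t ht
              exact ENNReal.ofReal_le_ofReal (le_min hε1 ht)
          _ ≤ ∫⁻ t, ENNReal.ofReal (min 1 t) ∂(μ.restrict (Ioi 0)) :=
              setLIntegral_le_lintegral _ _
      rw [he, ENNReal.mul_top (by simpa using hε)] at this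
      exact absurd (lt_of_le_of_lt this hμ) (lt_irrefl ⊤)
    calc μ.restrict (Ioi 0) (Iic 0 ∪ Ici (((n:ℝ)+1)⁻¹))
        ≤ _ + _ := measure_union_le _ _
      _ < ⊤ := by rw [h0, zero_add]; exact hfin
  · rw [sUnion_range]
    ext x
    simp only [mem_iUnion, mem_univ, iff_true, mem_union, mem_Iic, mem_Ici]
    rcases le_or_gt x 0 with h | h
    · exact ⟨0, Or.inl h⟩
    · obtain ⟨n, hn⟩ := exists_nat_gt x⁻¹
      refine ⟨n, Or.inr ?_⟩
      rw [inv_le_comm₀ (by positivity) h]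
      exact le_trans hn.le (by linarith)

section
variable (μ : Measure ℝ)
  (hμ : ∫⁻ t in Ioi (0:ℝ), ENNReal.ofReal (min 1 t) ∂μ < ⊤)


include hμ

lemma int_f {l : ℝ} (hl : 0 < l) :
    IntegrableOn (fun t => 1 - exp (-(l*t))) (Ioi 0) μ := by
  refine integrableOn_of_le_min μ hμ (Continuous.aestronglyMeasurable (by continuity))
    (K := max 1 l) (le_trans zero_le_one (le_max_left _ _)) (fun t ht => ?_)
  have ht' : (0:ℝ) < t := ht
  have h1 : (0:ℝ) ≤ l * t := by positivity
  rw [Real.norm_eq_abs, abs_of_nonneg (one_sub_exp_nonneg h1)]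
  exact le_trans (one_sub_exp_le_min h1) (min_mul_bound hl.le ht)

lemma int_texp {c : ℝ} (hc : 0 < c) :
    IntegrableOn (fun t => t * exp (-(c*t))) (Ioi 0) μ := by
  refine integrableOn_of_le_min μ hμ (Continuous.aestronglyMeasurable (by continuity))
    (K := max 1 c⁻¹) (le_trans zero_le_one (le_max_left _ _)) (fun t ht => ?_)
  have ht' : (0:ℝ) < t := ht
  rw [Real.norm_eq_abs, abs_of_nonneg (by positivity)]
  exact texp_bound hc ht'

lemma int_G {s : ℝ} (hs : 0 < s) :
    IntegrableOn (fun t => Gb (s*t)) (Ioi 0) μ := by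
  refine integrableOn_of_le_min μ hμ (Continuous.aestronglyMeasurable (by
    unfold Gb; continuity))
    (K := max 1 s) (le_trans zero_le_one (le_max_left _ _)) (fun t ht => ?_)
  have ht' : (0:ℝ) < t := ht
  have h1 : (0:ℝ) ≤ s * t := by positivity
  rw [Real.norm_eq_abs, abs_of_nonneg (Gb_nonneg h1)]
  exact le_trans (Gb_le_min h1) (min_mul_bound hs.le ht)

lemma int_bound {c : ℝ} (hc : 0 ≤ c) :
    IntegrableOn (fun t => c * min 1 t) (Ioi 0) μ := by
  refine integrableOn_of_le_min μ hμ ((continuous_const.mul (continuous_const.min continuous_id)).aestronglyMeasurable)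
    (K := c) hc (fun t ht => ?_)
  have ht' : (0:ℝ) < t := ht
  rw [Real.norm_eq_abs, abs_of_nonneg (by positivity)]

lemma hasDerivAt_int {l : ℝ} (hl : 0 < l) :
    HasDerivAt (fun z => ∫ t in Ioi (0:ℝ), (1 - exp (-(z*t))) ∂μ)
      (∫ t in Ioi (0:ℝ), t * exp (-(l*t)) ∂μ) l := by
  have key := hasDerivAt_integral_of_dominated_loc_of_deriv_le (μ := μ.restrict (Ioi 0))
    (F := fun z t => 1 - exp (-(z*t))) (F' := fun z t => t * exp (-(z*t))) (x₀ := l)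
    (bound := fun t => max 1 (l/2)⁻¹ * min 1 t) (s := Metric.ball l (l/2)) (Metric.ball_mem_nhds l (by positivity))
    (Eventually.of_forall (fun z => Continuous.aestronglyMeasurable (by continuity)))
    (int_f μ hμ hl) (Continuous.aestronglyMeasurable (by continuity))
    ?_ (int_bound μ hμ (le_trans zero_le_one (le_max_left _ _))) ?_
  · exact key.2
  · filter_upwards [ae_restrict_mem measurableSet_Ioi] with t ht z hz
    have ht' : (0:ℝ) < t := ht
    have hz' : l/2 < z := by
      rw [Metric.mem_ball, Real.dist_eq] at hz
      have := abs_lt.mp hz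
      linarith [this.1]
    rw [Real.norm_eq_abs, abs_of_nonneg (by positivity)]
    calc t * exp (-(z*t)) ≤ t * exp (-(l/2*t)) := by
          apply mul_le_mul_of_nonneg_left _ ht'.le
          exact exp_le_exp.mpr (by nlinarith)
      _ ≤ max 1 (l/2)⁻¹ * min 1 t := texp_bound (by positivity) ht'
  · filter_upwards with t z hz
    have h := (((hasDerivAt_mul_const t).fun_neg.exp).const_sub 1 : HasDerivAt
      (fun x => 1 - exp (-(x*t))) (-(exp (-(z*t)) * -t)) z)
    exact h.congr_deriv (by ring)

lemma deriv_phi (φ : ℝ → ℝ) (hφ : ∀ l > 0, φ l = ∫ t in Ioi (0:ℝ), (1 - exp (-(l * t))) ∂μ)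
    {l : ℝ} (hl : 0 < l) :
    deriv φ l = ∫ t in Ioi (0:ℝ), t * exp (-(l*t)) ∂μ := by
  have hev : φ =ᶠ[𝓝 l] fun z => ∫ t in Ioi (0:ℝ), (1 - exp (-(z*t))) ∂μ := by
    filter_upwards [isOpen_Ioi.mem_nhds (show l ∈ Ioi 0 from hl)] with z hz
    exact hφ z hz
  exact ((hasDerivAt_int μ hμ hl).congr_of_eventuallyEq hev).deriv

lemma H_eq (φ H : ℝ → ℝ)
    (hφ : ∀ l > 0, φ l = ∫ t in Ioi (0:ℝ), (1 - exp (-(l * t))) ∂μ)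
    (hH : ∀ l > 0, H l = φ l - l * deriv φ l) {l : ℝ} (hl : 0 < l) :
    H l = ∫ t in Ioi (0:ℝ), Gb (l*t) ∂μ := by
  rw [hH l hl, hφ l hl, deriv_phi μ hμ φ hφ hl, ← integral_const_mul,
    ← integral_sub (int_f μ hμ hl) ((int_texp μ hμ hl).const_mul l)]
  refine setIntegral_congr_fun measurableSet_Ioi (fun t ht => ?_)
  unfold Gb
  ring
end

lemma ftc {a t : ℝ} (ha : 0 < a) (ht : 0 < t) :
    IntegrableOn (fun s => Gb (s*t) / s^2) (Ioi a) volume ∧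
    (∫ s in Ioi a, Gb (s*t) / s^2) = (1 - exp (-(a*t))) / a := by
  set F : ℝ → ℝ := fun s => -((1 - exp (-(s*t))) / s) with hF
  have hds : ∀ s : ℝ, 0 < s → HasDerivAt F (Gb (s*t)/s^2) s := by
    intro s hs
    have h1 : HasDerivAt (fun s => 1 - exp (-(s*t))) (t * exp (-(s*t))) s := by
      have h := (((hasDerivAt_mul_const t).fun_neg.exp).const_sub 1 : HasDerivAt
        (fun x => 1 - exp (-(x*t))) (-(exp (-(s*t)) * -t)) s)
      exact h.congr_deriv (by ring)
    have h2 := (h1.fun_div (hasDerivAt_id s) (ne_of_gt hs)).fun_neg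
    refine h2.congr_deriv ?_
    unfold Gb
    have hs2 : s ≠ 0 := ne_of_gt hs
    simp only [id]
    field_simp
    ring
  have hlim : Tendsto F atTop (𝓝 0) := by
    refine squeeze_zero_norm' (a := fun s : ℝ => s⁻¹) ?_ tendsto_inv_atTop_zero
    filter_upwards [eventually_ge_atTop (1:ℝ)] with s hs
    have hst : (0:ℝ) ≤ s * t := by nlinarith
    have h1 : 0 ≤ 1 - exp (-(s*t)) := one_sub_exp_nonneg hst
    have h2 : 1 - exp (-(s*t)) ≤ 1 := le_trans (one_sub_exp_le_min hst) (min_le_left _ _)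
    rw [hF]
    simp only [norm_neg, Real.norm_eq_abs, abs_div]
    rw [abs_of_nonneg h1, abs_of_nonneg (by linarith : (0:ℝ) ≤ s)]
    rw [div_le_iff₀ (by linarith), inv_mul_cancel₀ (by linarith : s ≠ 0)]
    exact h2
  have hcont : ContinuousWithinAt F (Ici a) a := (hds a ha).continuousAt.continuousWithinAt
  have hderiv : ∀ s ∈ Ioi a, HasDerivAt F (Gb (s*t)/s^2) s :=
    fun s hs => hds s (lt_trans ha hs)
  have hpos : ∀ s ∈ Ioi a, 0 ≤ Gb (s*t)/s^2 := by
    intro s hs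
    have hs' : 0 < s := lt_trans ha hs
    have : (0:ℝ) ≤ s * t := by positivity
    exact div_nonneg (Gb_nonneg this) (sq_nonneg s)
  have hint : IntegrableOn (fun s => Gb (s*t)/s^2) (Ioi a) volume :=
    integrableOn_Ioi_deriv_of_nonneg hcont hderiv hpos hlim
  refine ⟨hint, ?_⟩
  rw [integral_Ioi_of_hasDerivAt_of_tendsto hcont hderiv hint hlim, hF]
  simp

lemma key (μ : Measure ℝ) (hμ : ∫⁻ t in Ioi (0:ℝ), ENNReal.ofReal (min 1 t) ∂μ < ⊤)
    (φ H : ℝ → ℝ)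
    (hφ : ∀ l > 0, φ l = ∫ t in Ioi (0:ℝ), (1 - exp (-(l * t))) ∂μ)
    (hH : ∀ l > 0, H l = φ l - l * deriv φ l) {a : ℝ} (ha : 0 < a) :
    IntegrableOn (fun s => H s / s^2) (Ioi a) volume ∧
    (∫ s in Ioi a, H s / s^2) = φ a / a := by
  haveI : SigmaFinite (μ.restrict (Ioi 0)) := sf μ hμ
  set ν := μ.restrict (Ioi 0) with hν
  set hfun : ℝ → ℝ := fun s => ∫ t, Gb (s*t) ∂ν with hhfun
  have meas_hfun : StronglyMeasurable hfun :=
    StronglyMeasurable.integral_prod_right'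
      (f := fun p : ℝ × ℝ => Gb (p.1 * p.2))
      ((Gb_cont.comp (continuous_fst.mul continuous_snd)).stronglyMeasurable)
  have hfun_nonneg : ∀ s : ℝ, 0 < s → 0 ≤ hfun s := by
    intro s hs
    apply integral_nonneg_of_ae
    filter_upwards [ae_restrict_mem measurableSet_Ioi] with t ht
    have ht' : (0:ℝ) < t := ht
    exact Gb_nonneg (by positivity)
  have step1 : ∀ s ∈ Ioi a, ENNReal.ofReal (hfun s / s^2)
      = ∫⁻ t, ENNReal.ofReal (Gb (s*t) / s^2) ∂ν := by
    intro s hs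
    have hs' : 0 < s := lt_trans ha hs
    have hint : Integrable (fun t => Gb (s*t)/s^2) ν := (int_G μ hμ hs').div_const _
    have : hfun s / s^2 = ∫ t, Gb (s*t)/s^2 ∂ν := (integral_div _ _).symm
    rw [this]
    apply ofReal_integral_eq_lintegral_ofReal hint
    filter_upwards [ae_restrict_mem measurableSet_Ioi] with t ht
    have ht' : (0:ℝ) < t := ht
    exact div_nonneg (Gb_nonneg (by positivity)) (sq_nonneg s)
  have measp : Measurable fun p : ℝ × ℝ => ENNReal.ofReal (Gb (p.1*p.2)/p.1^2) :=
    (((Gb_cont.comp (continuous_fst.mul continuous_snd)).measurable).div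
      ((continuous_fst.pow 2).measurable)).ennreal_ofReal
  have swap : (∫⁻ s in Ioi a, ∫⁻ t, ENNReal.ofReal (Gb (s*t)/s^2) ∂ν)
      = ∫⁻ t, (∫⁻ s in Ioi a, ENNReal.ofReal (Gb (s*t)/s^2)) ∂ν := by
    exact lintegral_lintegral_swap (μ := volume.restrict (Ioi a)) (ν := ν)
      (f := fun s t => ENNReal.ofReal (Gb (s*t)/s^2)) measp.aemeasurable
  have inner : ∀ᵐ t ∂ν, (∫⁻ s in Ioi a, ENNReal.ofReal (Gb (s*t)/s^2))
      = ENNReal.ofReal ((1 - exp (-(a*t)))/a) := by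
    filter_upwards [ae_restrict_mem measurableSet_Ioi] with t ht
    have ht' : (0:ℝ) < t := ht
    rw [← (ftc ha ht').2]
    symm
    apply ofReal_integral_eq_lintegral_ofReal (ftc ha ht').1
    filter_upwards [ae_restrict_mem measurableSet_Ioi] with s hs
    have hs' : 0 < s := lt_trans ha hs
    exact div_nonneg (Gb_nonneg (by positivity)) (sq_nonneg s)
  have nonneg_f : ∀ᵐ t ∂ν, 0 ≤ 1 - exp (-(a*t)) := by
    filter_upwards [ae_restrict_mem measurableSet_Ioi] with t ht
    have ht' : (0:ℝ) < t := ht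
    exact one_sub_exp_nonneg (by positivity)
  have last : (∫⁻ t, ENNReal.ofReal ((1 - exp (-(a*t)))/a) ∂ν) = ENNReal.ofReal (φ a / a) := by
    rw [hφ a ha]
    have : (∫ t, (1 - exp (-(a*t))) ∂ν)/a = ∫ t, (1 - exp (-(a*t)))/a ∂ν :=
      (integral_div _ _).symm
    rw [this]
    symm
    apply ofReal_integral_eq_lintegral_ofReal ((int_f μ hμ ha).div_const a)
    filter_upwards [nonneg_f] with t ht
    exact div_nonneg ht ha.le
  have total : (∫⁻ s in Ioi a, ENNReal.ofReal (hfun s / s^2)) = ENNReal.ofReal (φ a / a) := by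
    rw [setLIntegral_congr_fun measurableSet_Ioi step1, swap, ← last]
    exact lintegral_congr_ae inner
  have phi_nonneg : 0 ≤ φ a := by
    rw [hφ a ha]; exact integral_nonneg_of_ae nonneg_f
  have phia_nonneg : 0 ≤ φ a / a := div_nonneg phi_nonneg ha.le
  have measq : AEStronglyMeasurable (fun s => hfun s / s^2) (volume.restrict (Ioi a)) :=
    (meas_hfun.measurable.div ((measurable_id.pow_const 2))).aestronglyMeasurable
  have nonneg_q : 0 ≤ᵐ[volume.restrict (Ioi a)] fun s => hfun s / s^2 := by
    filter_upwards [ae_restrict_mem measurableSet_Ioi] with s hs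
    exact div_nonneg (hfun_nonneg s (lt_trans ha hs)) (sq_nonneg s)
  have hint_q : IntegrableOn (fun s => hfun s / s^2) (Ioi a) volume := by
    refine ⟨measq, ?_⟩
    rw [hasFiniteIntegral_iff_ofReal nonneg_q, total]
    exact ENNReal.ofReal_lt_top
  have hval_q : (∫ s in Ioi a, hfun s / s^2) = φ a / a := by
    rw [integral_eq_lintegral_of_nonneg_ae nonneg_q measq, total,
      ENNReal.toReal_ofReal phia_nonneg]
  have heq : ∀ᵐ s ∂(volume.restrict (Ioi a)), hfun s / s^2 = H s / s^2 := by
    filter_upwards [ae_restrict_mem measurableSet_Ioi] with s hs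
    rw [H_eq μ hμ φ H hφ hH (lt_trans ha hs)]
  exact ⟨hint_q.congr heq, by rw [← integral_congr_ae heq, hval_q]⟩

theorem stmt4 (μ : Measure ℝ)
    (hμ : ∫⁻ t in Ioi (0:ℝ), ENNReal.ofReal (min 1 t) ∂μ < ⊤)
    (φ H : ℝ → ℝ)
    (hφ : ∀ l > 0, φ l = ∫ t in Ioi (0:ℝ), (1 - exp (-(l * t))) ∂μ)
    (hH : ∀ l > 0, H l = φ l - l * deriv φ l)
    (CU δ lU : ℝ) (hCU : 0 < CU) (hδ : 0 < δ) (hlU : 0 ≤ lU)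
    (hscal : ∀ l > lU, ∀ x ≥ 1, H (l * x) ≤ CU * x ^ δ * H l) :
    ∀ l > lU, ∀ x ≥ 1, φ (l * x) ≤ CU * x ^ δ * φ l := by
  intro l hl x hx
  have hl0 : 0 < l := lt_of_le_of_lt hlU hl
  have hx0 : 0 < x := lt_of_lt_of_le one_pos hx
  have hlx : 0 < l * x := by positivity
  obtain ⟨int_l, val_l⟩ := key μ hμ φ H hφ hH hl0
  obtain ⟨int_lx, val_lx⟩ := key μ hμ φ H hφ hH hlx
  have hsub : (∫ u in Ioi l, H (x*u)/(x*u)^2) = x⁻¹ * (φ (l*x)/(l*x)) := by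
    rw [integral_comp_mul_left_Ioi (fun s => H s/s^2) l hx0, smul_eq_mul]
    congr 1
    rw [mul_comm x l, val_lx]
  have hint_sub : IntegrableOn (fun u => H (x*u)/(x*u)^2) (Ioi l) volume := by
    refine (integrableOn_Ioi_comp_mul_left_iff (fun s => H s/s^2) l hx0).mpr ?_
    rwa [mul_comm x l]
  have upper_int : IntegrableOn (fun u => (CU * x^δ / x^2) * (H u/u^2)) (Ioi l) volume :=
    int_l.const_mul _
  have hmono : ∀ u ∈ Ioi l, H (x*u)/(x*u)^2 ≤ (CU * x^δ / x^2) * (H u/u^2) := by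
    intro u hu
    have hu0 : 0 < u := lt_trans hl0 hu
    have h1 : H (x*u) ≤ CU * x^δ * H u := by
      rw [mul_comm x u]; exact hscal u (lt_trans hl hu) x hx
    calc H (x*u)/(x*u)^2 ≤ (CU * x^δ * H u)/(x*u)^2 := by gcongr
      _ = (CU * x^δ / x^2) * (H u/u^2) := by
          field_simp
          all_goals try (left; first | trivial | ring)
          all_goals ring
  have hle := setIntegral_mono_on hint_sub upper_int measurableSet_Ioi hmono
  rw [hsub, integral_const_mul, val_l] at hle
  have hx2 : (0:ℝ) < l * x^2 := by positivity
  have e1 : x⁻¹ * (φ (l*x)/(l*x)) = φ (l*x) * (l*x^2)⁻¹ := by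
    field_simp
    all_goals try (left; first | trivial | ring)
    all_goals ring
  have e2 : CU * x^δ / x^2 * (φ l / l) = (CU * x^δ * φ l) * (l*x^2)⁻¹ := by
    field_simp
    all_goals try (left; first | trivial | ring)
    all_goals ring
  rw [e1, e2] at hle
  exact le_of_mul_le_mul_right (by simpa [mul_comm] using hle) (inv_pos.mpr hx2)
end

section
/- Let μ be the Lévy measure of a subordinator with Laplace exponent φ and H(λ) = φ(λ) - λφ'(λ). Then μ(r,∞) ≤ 2e·H(r^{-1}) for all r > 0. -/
open MeasureTheory Set Real

noncomputable def gfun (x : ℝ) : ℝ := 1 - Real.exp (-x) - x * Real.exp (-x)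

lemma hasDerivAt_gfun (x : ℝ) : HasDerivAt gfun (x * Real.exp (-x)) x := by
  have h1 : HasDerivAt (fun x : ℝ => Real.exp (-x)) (-Real.exp (-x)) x := by
    simpa using ((hasDerivAt_neg x).exp)
  have h2 : HasDerivAt (fun x : ℝ => x * Real.exp (-x))
      (1 * Real.exp (-x) + x * (-Real.exp (-x))) x := (hasDerivAt_id x).mul h1
  have h3 : HasDerivAt (fun x : ℝ => 1 - Real.exp (-x)) (0 - -Real.exp (-x)) x :=
    (hasDerivAt_const x 1).sub h1
  have := h3.sub h2
  exact this.congr_deriv (by ring)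

lemma gfun_mono : MonotoneOn gfun (Ici 0) := by
  apply monotoneOn_of_deriv_nonneg (convex_Ici 0)
  · exact (Continuous.continuousOn (by
      have : Continuous gfun := by
        unfold gfun; continuity
      exact this))
  · intro x _
    exact (hasDerivAt_gfun x).differentiableAt.differentiableWithinAt
  · intro x hx
    rw [interior_Ici] at hx
    rw [(hasDerivAt_gfun x).deriv]
    have : (0:ℝ) ≤ x := le_of_lt hx
    positivity

lemma gfun_nonneg {x : ℝ} (hx : 0 ≤ x) : 0 ≤ gfun x := by
  have := gfun_mono (self_mem_Ici) hx hx
  simpa [gfun] using this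

lemma xexp_le (x : ℝ) : x * Real.exp (-x) ≤ (Real.exp 1)⁻¹ := by
  have h := Real.add_one_le_exp (x - 1)
  have hx : x ≤ Real.exp (x - 1) := by linarith
  have h2 : x * Real.exp (-x) ≤ Real.exp (x - 1) * Real.exp (-x) :=
    mul_le_mul_of_nonneg_right hx (Real.exp_pos _).le
  calc x * Real.exp (-x) ≤ Real.exp (x - 1) * Real.exp (-x) := h2
    _ = Real.exp (-1) := by rw [← Real.exp_add]; ring_nf
    _ = (Real.exp 1)⁻¹ := Real.exp_neg 1

section Main

variable {μ : Measure ℝ} (hμ : ∫⁻ t in Ioi (0:ℝ), ENNReal.ofReal (min 1 t) ∂μ < ⊤)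

lemma min_integrable (hμ : ∫⁻ t in Ioi (0:ℝ), ENNReal.ofReal (min 1 t) ∂μ < ⊤) :
    IntegrableOn (fun t => min 1 t) (Ioi 0) μ := by
  constructor
  · exact (continuous_const.min continuous_id).aestronglyMeasurable
  · have hnn : 0 ≤ᵐ[μ.restrict (Ioi 0)] fun t => min 1 t := by
      filter_upwards [ae_restrict_mem measurableSet_Ioi] with t ht
      exact le_min zero_le_one ht.le
    rw [hasFiniteIntegral_iff_ofReal hnn]
    exact hμ

lemma bound_integrable (hμ : ∫⁻ t in Ioi (0:ℝ), ENNReal.ofReal (min 1 t) ∂μ < ⊤)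
    {C : ℝ} {f : ℝ → ℝ} (hf : AEStronglyMeasurable f (μ.restrict (Ioi 0)))
    (hb : ∀ t > (0:ℝ), ‖f t‖ ≤ C * min 1 t) :
    IntegrableOn f (Ioi 0) μ := by
  apply Integrable.mono' ((min_integrable hμ).const_mul C) hf
  filter_upwards [ae_restrict_mem measurableSet_Ioi] with t ht
  exact hb t ht

lemma texp_integrable (hμ : ∫⁻ t in Ioi (0:ℝ), ENNReal.ofReal (min 1 t) ∂μ < ⊤)
    {a : ℝ} (ha : 0 < a) :
    IntegrableOn (fun t => t * Real.exp (-(a * t))) (Ioi 0) μ := by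
  apply bound_integrable hμ (C := max 1 (a⁻¹ * (Real.exp 1)⁻¹))
  · exact ((continuous_id.mul ((continuous_const.mul continuous_id).neg.rexp))).aestronglyMeasurable
  · intro t ht
    have hexp : Real.exp (-(a * t)) ≤ 1 := Real.exp_le_one_iff.mpr (by nlinarith)
    have hnn : 0 ≤ t * Real.exp (-(a * t)) := by positivity
    rw [Real.norm_of_nonneg hnn]
    rcases le_total t 1 with h | h
    · have : t * Real.exp (-(a * t)) ≤ t := by nlinarith [Real.exp_pos (-(a*t))]
      have hm : min 1 t = t := min_eq_right h
      rw [hm]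
      nlinarith [le_max_left (1:ℝ) (a⁻¹ * (Real.exp 1)⁻¹)]
    · have hm : min 1 t = 1 := min_eq_left h
      rw [hm, mul_one]
      have := xexp_le (a * t)
      have h2 : t * Real.exp (-(a * t)) ≤ a⁻¹ * (Real.exp 1)⁻¹ := by
        rw [← mul_le_mul_iff_right₀ ha]
        calc a * (t * Real.exp (-(a * t))) = (a * t) * Real.exp (-(a * t)) := by ring
          _ ≤ (Real.exp 1)⁻¹ := this
          _ = a * (a⁻¹ * (Real.exp 1)⁻¹) := by field_simp
      exact h2.trans (le_max_right _ _)

lemma one_sub_exp_integrable (hμ : ∫⁻ t in Ioi (0:ℝ), ENNReal.ofReal (min 1 t) ∂μ < ⊤)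
    {a : ℝ} (ha : 0 < a) :
    IntegrableOn (fun t => 1 - Real.exp (-(a * t))) (Ioi 0) μ := by
  apply bound_integrable hμ (C := max 1 a)
  · exact (continuous_const.sub ((continuous_const.mul continuous_id).neg.rexp)).aestronglyMeasurable
  · intro t ht
    have h1 : Real.exp (-(a * t)) ≤ 1 := Real.exp_le_one_iff.mpr (by nlinarith)
    have h2 : 1 - a * t ≤ Real.exp (-(a * t)) := by
      have := Real.add_one_le_exp (-(a * t)); linarith
    rw [Real.norm_of_nonneg (by linarith)]
    rcases le_total t 1 with h | h
    · rw [min_eq_right h]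
      nlinarith [le_max_right (1:ℝ) a, le_max_left (1:ℝ) a]
    · rw [min_eq_left h, mul_one]
      nlinarith [le_max_left (1:ℝ) a, Real.exp_pos (-(a*t))]

end Main

lemma hasDerivAt_inner (t x : ℝ) :
    HasDerivAt (fun x : ℝ => 1 - Real.exp (-(x * t))) (t * Real.exp (-(x * t))) x := by
  have h1 : HasDerivAt (fun x : ℝ => -(x * t)) (-t) x := by
    simpa using ((hasDerivAt_id x).mul_const t).fun_neg
  have h2 := h1.exp
  have h3 := (hasDerivAt_const x (1:ℝ)).sub h2
  exact h3.congr_deriv (by ring)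

lemma deriv_int {μ : Measure ℝ}
    (hμ : ∫⁻ t in Ioi (0:ℝ), ENNReal.ofReal (min 1 t) ∂μ < ⊤) {l : ℝ} (hl : 0 < l) :
    HasDerivAt (fun x => ∫ t in Ioi (0:ℝ), (1 - Real.exp (-(x * t))) ∂μ)
      (∫ t in Ioi (0:ℝ), t * Real.exp (-(l * t)) ∂μ) l := by
  have := hasDerivAt_integral_of_dominated_loc_of_deriv_le (μ := μ.restrict (Ioi 0))
    (F := fun x t => 1 - Real.exp (-(x * t))) (F' := fun x t => t * Real.exp (-(x * t)))
    (x₀ := l) (bound := fun t => t * Real.exp (-((l/2) * t))) (Metric.ball_mem_nhds l (half_pos hl))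
    (Filter.Eventually.of_forall fun x =>
      (continuous_const.sub ((continuous_const.mul continuous_id).neg.rexp)).aestronglyMeasurable)
    (one_sub_exp_integrable hμ hl)
    ((continuous_id.mul ((continuous_const.mul continuous_id).neg.rexp)).aestronglyMeasurable)
    ?_ (texp_integrable hμ (half_pos hl))
    (Filter.Eventually.of_forall fun t x _ => hasDerivAt_inner t x)
  · exact this.2
  · filter_upwards [ae_restrict_mem measurableSet_Ioi] with t ht x hx
    have hx2 : l / 2 < x := by
      have := abs_lt.mp (mem_ball_iff_norm.mp hx)
      linarith [this.1]
    have ht' : 0 < t := ht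
    have hnn : 0 ≤ t * Real.exp (-(x * t)) := mul_nonneg ht'.le (Real.exp_pos _).le
    rw [Real.norm_of_nonneg hnn]
    have hle : Real.exp (-(x * t)) ≤ Real.exp (-((l/2) * t)) := by
      apply Real.exp_le_exp.mpr
      nlinarith
    exact mul_le_mul_of_nonneg_left hle ht'.le

theorem stmt9 (μ : Measure ℝ)
    (hμ : ∫⁻ t in Ioi (0:ℝ), ENNReal.ofReal (min 1 t) ∂μ < ⊤)
    (b : ℝ) (hb : 0 ≤ b)
    (φ H : ℝ → ℝ)
    (hφ : ∀ l > 0, φ l = b * l + ∫ t in Ioi (0:ℝ), (1 - exp (-(l * t))) ∂μ)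
    (hH : ∀ l > 0, H l = φ l - l * deriv φ l) :
    ∀ r > 0, (μ (Ioi r)).toReal ≤ 2 * exp 1 * H r⁻¹ := by
  intro r hr
  set l := r⁻¹ with hldef
  have hlpos : 0 < l := inv_pos.mpr hr
  -- derivative of φ at l
  have hder : HasDerivAt φ (b + ∫ t in Ioi (0:ℝ), t * Real.exp (-(l * t)) ∂μ) l := by
    have h1 : HasDerivAt (fun x => b * x + ∫ t in Ioi (0:ℝ), (1 - Real.exp (-(x * t))) ∂μ)
        (b * 1 + ∫ t in Ioi (0:ℝ), t * Real.exp (-(l * t)) ∂μ) l :=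
      ((hasDerivAt_id l).const_mul b).add (deriv_int hμ hlpos)
    have heq : (fun x => b * x + ∫ t in Ioi (0:ℝ), (1 - Real.exp (-(x * t))) ∂μ) =ᶠ[nhds l] φ := by
      filter_upwards [IsOpen.mem_nhds isOpen_Ioi hlpos] with x hx
      exact (hφ x hx).symm
    simpa using h1.congr_of_eventuallyEq heq.symm
  have hint1 := one_sub_exp_integrable hμ hlpos
  have hint2 := texp_integrable hμ hlpos
  have hg_int : IntegrableOn (fun t => gfun (l * t)) (Ioi 0) μ := by
    apply Integrable.congr (hint1.sub (hint2.const_mul l))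
    exact Filter.Eventually.of_forall fun t => by simp only [Pi.sub_apply, gfun]; ring
  have hHl : H l = ∫ t in Ioi (0:ℝ), gfun (l * t) ∂μ := by
    rw [hH l hlpos, hφ l hlpos, hder.deriv]
    have h4 : l * ∫ t in Ioi (0:ℝ), t * Real.exp (-(l * t)) ∂μ
        = ∫ t in Ioi (0:ℝ), l * (t * Real.exp (-(l * t))) ∂μ := (integral_const_mul l _).symm
    rw [mul_add, h4]
    rw [show b * l + (∫ t in Ioi (0:ℝ), (1 - Real.exp (-(l * t))) ∂μ)
        - (l * b + ∫ t in Ioi (0:ℝ), l * (t * Real.exp (-(l * t))) ∂μ)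
      = (∫ t in Ioi (0:ℝ), (1 - Real.exp (-(l * t))) ∂μ)
        - ∫ t in Ioi (0:ℝ), l * (t * Real.exp (-(l * t))) ∂μ from by ring]
    rw [← integral_sub hint1 (hint2.const_mul l)]
    apply setIntegral_congr_fun measurableSet_Ioi
    intro t _
    simp only [gfun]; ring
  -- finiteness of μ (Ioi r)
  have hμfin : μ (Ioi r) < ⊤ := by
    have hmeas : Measurable fun t : ℝ => ENNReal.ofReal (min 1 t) :=
      (measurable_const.min measurable_id).ennreal_ofReal
    have hchain : ENNReal.ofReal (min 1 r) * μ (Ioi r)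
        ≤ ∫⁻ t in Ioi (0:ℝ), ENNReal.ofReal (min 1 t) ∂μ := by
      calc ENNReal.ofReal (min 1 r) * μ (Ioi r)
          = ∫⁻ _ in Ioi r, ENNReal.ofReal (min 1 r) ∂μ := by
            rw [setLIntegral_const, mul_comm]
        _ ≤ ∫⁻ t in Ioi r, ENNReal.ofReal (min 1 t) ∂μ := by
            apply setLIntegral_mono hmeas
            intro t ht
            exact ENNReal.ofReal_le_ofReal (min_le_min le_rfl (le_of_lt ht))
        _ ≤ ∫⁻ t in Ioi (0:ℝ), ENNReal.ofReal (min 1 t) ∂μ :=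
            lintegral_mono_set (Ioi_subset_Ioi hr.le)
    by_contra h
    have h' : μ (Ioi r) = ⊤ := by
      rw [lt_top_iff_ne_top] at h; push_neg at h; exact h
    have hne : ENNReal.ofReal (min 1 r) ≠ 0 := by
      simp only [ne_eq, ENNReal.ofReal_eq_zero, not_le]
      exact lt_min one_pos hr
    rw [h', ENNReal.mul_top hne] at hchain
    have : (⊤:ENNReal) ≤ ∫⁻ t in Ioi (0:ℝ), ENNReal.ofReal (min 1 t) ∂μ := hchain
    exact absurd (top_le_iff.mp this) (LT.lt.ne hμ)
  -- lower bound for H l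
  have step1 : gfun 1 * (μ (Ioi r)).toReal ≤ ∫ t in Ioi r, gfun (l * t) ∂μ := by
    have hc : ∫ _ in Ioi r, gfun 1 ∂μ = (μ (Ioi r)).toReal * gfun 1 := by
      rw [setIntegral_const, smul_eq_mul]; rfl
    rw [mul_comm, ← hc]
    apply setIntegral_mono_on
    · exact integrableOn_const hμfin.ne
    · exact hg_int.mono_set (Ioi_subset_Ioi hr.le)
    · exact measurableSet_Ioi
    · intro t ht
      have htr : r < t := ht
      have h1lt : 1 ≤ l * t := by
        rw [hldef]
        rw [show (1:ℝ) = r⁻¹ * r from (inv_mul_cancel₀ hr.ne').symm]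
        exact mul_le_mul_of_nonneg_left htr.le (inv_pos.mpr hr).le
      exact gfun_mono (mem_Ici.mpr zero_le_one) (mem_Ici.mpr (le_trans zero_le_one h1lt)) h1lt
  have step2 : ∫ t in Ioi r, gfun (l * t) ∂μ ≤ ∫ t in Ioi (0:ℝ), gfun (l * t) ∂μ := by
    apply setIntegral_mono_set hg_int
    · filter_upwards [ae_restrict_mem measurableSet_Ioi] with t ht
      exact gfun_nonneg (mul_nonneg hlpos.le (le_of_lt ht))
    · exact HasSubset.Subset.eventuallyLE (Ioi_subset_Ioi hr.le)
  have key : gfun 1 * (μ (Ioi r)).toReal ≤ H l := by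
    rw [hHl]; exact step1.trans step2
  have hH0 : 0 ≤ H l := by
    rw [hHl]
    apply setIntegral_nonneg measurableSet_Ioi
    intro t ht
    exact gfun_nonneg (mul_nonneg hlpos.le (le_of_lt ht))
  have hg1 : gfun 1 = 1 - 2 * (Real.exp 1)⁻¹ := by
    simp only [gfun, Real.exp_neg, one_mul]; ring
  have hE := Real.exp_one_gt_d9
  have hepos : (0:ℝ) < Real.exp 1 := Real.exp_pos 1
  have heinv : Real.exp 1 * (Real.exp 1)⁻¹ = 1 := mul_inv_cancel₀ hepos.ne'
  have hμnn : 0 ≤ (μ (Ioi r)).toReal := ENNReal.toReal_nonneg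
  rw [hg1] at key
  nlinarith [mul_le_mul_of_nonneg_left key (by positivity : (0:ℝ) ≤ 2 * Real.exp 1),
    mul_nonneg hH0 hepos.le]
end

section
/- Let S = (S_t) be a subordinator with Laplace exponent φ, i.e. E[e^{-λ S_t}] = e^{-tφ(λ)}. For any α, β > 0 with αβ > 1 there exist ρ ∈ (0,1) and τ > 0 such that for all t > 0, P(1/(α φ^{-1}(β t^{-1})) ≤ S_t ≤ 1/φ^{-1}(ρ t^{-1})) ≥ τ. -/
open MeasureTheory Set Real

set_option maxHeartbeats 1000000 in
theorem stmt11 {Ω : Type*} [MeasurableSpace Ω] (P : Measure Ω) [IsProbabilityMeasure P]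
    (S : ℝ → Ω → ℝ) (hSmeas : ∀ t, Measurable (S t))
    (φ φinv : ℝ → ℝ)
    (hmono : StrictMonoOn φ (Ioi 0))
    (hinv : ∀ y > 0, 0 < φinv y ∧ φ (φinv y) = y)
    (hLap : ∀ t > 0, ∀ l > 0, (∫ ω, exp (-(l * S t ω)) ∂P) = exp (-(t * φ l))) :
    ∀ α β : ℝ, 0 < α → 0 < β → 1 < α * β →
      ∃ ρ : ℝ, ρ ∈ Ioo (0:ℝ) 1 ∧ ∃ τ > 0, ∀ t > 0,
        ENNReal.ofReal τ ≤
          P {ω | 1 / (α * φinv (β / t)) ≤ S t ω ∧ S t ω ≤ 1 / φinv (ρ / t)} := by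
  intro α β hα hβ hαβ
  -- basic constants
  have hβα : 1 / α < β := by
    rw [div_lt_iff₀ hα]; linarith [mul_comm α β]
  set c : ℝ := 1 - exp (1 / α - β) with hc
  have hc0 : 0 < c := by
    have : exp (1 / α - β) < 1 := exp_lt_one_iff.2 (by linarith)
    simp only [hc]; linarith
  have hc1 : c < 1 := by
    have := exp_pos (1 / α - β); simp only [hc]; linarith
  have he1 : exp (-1 : ℝ) < 1 := exp_lt_one_iff.2 (by norm_num)
  have he1' : (0:ℝ) < 1 - exp (-1) := by linarith
  set u : ℝ := (1 - exp (-1)) * c / 2 with hu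
  clear_value c u
  have hu0 : 0 < u := by rw [hu]; positivity
  have hu_half : u < 1 / 2 := by
    have h1 : (1 - exp (-1)) * c < 1 := by nlinarith [exp_pos (-1 : ℝ)]
    have h2 : u = (1 - exp (-1)) * c / 2 := hu
    nlinarith [h1, h2]
  set ρ : ℝ := -Real.log (1 - u) with hρ
  clear_value ρ
  have h1u0 : (0:ℝ) < 1 - u := by linarith
  have h1u1 : 1 - u < 1 := by linarith
  have hρ0 : 0 < ρ := by
    have : Real.log (1 - u) < 0 := Real.log_neg h1u0 h1u1
    rw [hρ]; linarith
  have hρ1 : ρ < 1 := by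
    have h2 : (1:ℝ)/2 < 1 - u := by linarith
    have hlog : Real.log (1/2) < Real.log (1 - u) := Real.log_lt_log (by norm_num) h2
    have hlog2 : Real.log (1/2) = -Real.log 2 := by
      rw [Real.log_div one_ne_zero (by norm_num), Real.log_one]; ring
    have l2 : Real.log 2 < 1 := by
      have := Real.log_two_lt_d9; linarith
    rw [hρ]; rw [hlog2] at hlog; linarith
  have hexpρ : exp (-ρ) = 1 - u := by
    rw [hρ, neg_neg]; exact Real.exp_log h1u0
  refine ⟨ρ, ⟨hρ0, hρ1⟩, c / 2, by linarith, ?_⟩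
  intro t ht
  -- integrability of the exponential moments
  have hInt : ∀ l > 0, Integrable (fun ω => exp (-(l * S t ω))) P := by
    intro l hl
    by_contra h
    have h0 := integral_undef h
    rw [hLap t ht l hl] at h0
    exact (exp_pos _).ne' h0
  -- a.e. nonnegativity of S t
  have hae : ∀ᵐ ω ∂P, 0 ≤ S t ω := by
    have key : ∀ ε > 0, P {ω | S t ω < -ε} = 0 := by
      intro ε hε
      have hb : ∀ n : ℕ, (P {ω | S t ω < -ε}).toReal ≤
          exp (-(((n:ℝ)+1) * ε)) * exp (-(t * φ 1)) := by
        intro n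
        set l : ℝ := (n:ℝ) + 1 with hl'
        have hl : 0 < l := by positivity
        have markov := mul_meas_ge_le_integral_of_nonneg (μ := P)
          (f := fun ω => exp (-(l * S t ω)))
          (Filter.Eventually.of_forall fun ω => (exp_pos _).le) (hInt l hl) (exp (l * ε))
        rw [hLap t ht l hl] at markov
        have hsub : {ω | S t ω < -ε} ⊆ {ω | exp (l * ε) ≤ exp (-(l * S t ω))} := by
          intro ω hω
          simp only [mem_setOf_eq] at hω ⊢
          apply exp_le_exp.2; nlinarith
        have hmono' : (P {ω | S t ω < -ε}).toReal ≤
            (P {ω | exp (l * ε) ≤ exp (-(l * S t ω))}).toReal :=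
          ENNReal.toReal_mono (measure_ne_top P _) (measure_mono hsub)
        have hφ1 : φ 1 ≤ φ l := by
          rcases eq_or_lt_of_le (by linarith : (1:ℝ) ≤ l) with h | h
          · rw [h]
          · exact (hmono (by norm_num) (by simp only [mem_Ioi]; linarith) h).le
        have hexp_mono : exp (-(t * φ l)) ≤ exp (-(t * φ 1)) := by
          apply exp_le_exp.2; nlinarith
        have h1 : exp (l * ε) * (P {ω | S t ω < -ε}).toReal ≤ exp (-(t * φ 1)) := by
          calc exp (l * ε) * (P {ω | S t ω < -ε}).toReal
              ≤ exp (l * ε) * (P {ω | exp (l * ε) ≤ exp (-(l * S t ω))}).toReal := by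
                apply mul_le_mul_of_nonneg_left hmono' (exp_pos _).le
            _ ≤ exp (-(t * φ l)) := markov
            _ ≤ exp (-(t * φ 1)) := hexp_mono
        have := (le_div_iff₀' (exp_pos (l * ε))).2 h1
        calc (P {ω | S t ω < -ε}).toReal ≤ exp (-(t * φ 1)) / exp (l * ε) := this
          _ = exp (-(l * ε)) * exp (-(t * φ 1)) := by
              rw [div_eq_mul_inv, ← exp_neg]; ring
      have htend : Filter.Tendsto (fun n : ℕ => exp (-(((n:ℝ)+1) * ε)) * exp (-(t * φ 1)))
          Filter.atTop (nhds (0 * exp (-(t * φ 1)))) := by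
        apply Filter.Tendsto.mul_const
        apply Real.tendsto_exp_atBot.comp
        apply Filter.tendsto_neg_atTop_atBot.comp
        apply Filter.Tendsto.atTop_mul_const hε
        exact Filter.tendsto_atTop_add_const_right _ _ tendsto_natCast_atTop_atTop
      rw [zero_mul] at htend
      have hle : (P {ω | S t ω < -ε}).toReal ≤ 0 := ge_of_tendsto' htend hb
      have hge : 0 ≤ (P {ω | S t ω < -ε}).toReal := ENNReal.toReal_nonneg
      have : (P {ω | S t ω < -ε}).toReal = 0 := le_antisymm hle hge
      rw [ENNReal.toReal_eq_zero_iff] at this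
      rcases this with h | h
      · exact h
      · exact absurd h (measure_ne_top P _)
    rw [ae_iff]
    have hsub : {ω | ¬ 0 ≤ S t ω} ⊆ ⋃ n : ℕ, {ω | S t ω < -(1 / ((n:ℝ)+1))} := by
      intro ω hω
      simp only [mem_setOf_eq, not_le] at hω
      obtain ⟨n, hn⟩ := exists_nat_gt (1 / (-(S t ω)))
      refine mem_iUnion.2 ⟨n, ?_⟩
      simp only [mem_setOf_eq]
      have hS : 0 < -(S t ω) := by linarith
      have hn1 : 1 / (-(S t ω)) < (n:ℝ) + 1 := by
        have : (n:ℝ) ≤ (n:ℝ) + 1 := by linarith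
        linarith
      have : 1 / ((n:ℝ)+1) < -(S t ω) := by
        rw [div_lt_iff₀ (by positivity)]
        rw [div_lt_iff₀ hS] at hn1
        nlinarith
      linarith
    refine measure_mono_null hsub (measure_iUnion_null fun n => key _ (by positivity))
  -- the two Markov bounds
  obtain ⟨hlppos, hflp⟩ := hinv (β / t) (by positivity)
  obtain ⟨hlpos, hflam⟩ := hinv (ρ / t) (div_pos hρ0 ht)
  set lam' : ℝ := φinv (β / t) with hlam'
  set lam : ℝ := φinv (ρ / t) with hlam
  clear_value lam' lam
  have htβ : t * (β / t) = β := by field_simp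
  have htρ : t * (ρ / t) = ρ := by field_simp
  -- Bound 1 : lower tail
  have hA : (P {ω | S t ω < 1 / (α * lam')}).toReal ≤ exp (1 / α - β) := by
    have markov := mul_meas_ge_le_integral_of_nonneg (μ := P)
      (f := fun ω => exp (-(lam' * S t ω)))
      (Filter.Eventually.of_forall fun ω => (exp_pos _).le) (hInt lam' hlppos)
      (exp (-(1 / α)))
    rw [hLap t ht lam' hlppos, hflp, htβ] at markov
    have hsub : {ω | S t ω < 1 / (α * lam')} ⊆
        {ω | exp (-(1 / α)) ≤ exp (-(lam' * S t ω))} := by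
      intro ω hω
      simp only [mem_setOf_eq] at hω ⊢
      apply exp_le_exp.2
      have h1 : lam' * S t ω < lam' * (1 / (α * lam')) :=
        mul_lt_mul_of_pos_left hω hlppos
      have h2 : lam' * (1 / (α * lam')) = 1 / α := by field_simp <;> ring
      rw [h2] at h1; linarith
    have hmono' : (P {ω | S t ω < 1 / (α * lam')}).toReal ≤
        (P {ω | exp (-(1 / α)) ≤ exp (-(lam' * S t ω))}).toReal :=
      ENNReal.toReal_mono (measure_ne_top P _) (measure_mono hsub)
    have h1 : exp (-(1 / α)) * (P {ω | S t ω < 1 / (α * lam')}).toReal ≤ exp (-β) := by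
      calc exp (-(1 / α)) * (P {ω | S t ω < 1 / (α * lam')}).toReal
          ≤ exp (-(1 / α)) * (P {ω | exp (-(1 / α)) ≤ exp (-(lam' * S t ω))}).toReal :=
            mul_le_mul_of_nonneg_left hmono' (exp_pos _).le
        _ ≤ exp (-β) := markov
    have := (le_div_iff₀' (exp_pos (-(1 / α)))).2 h1
    calc (P {ω | S t ω < 1 / (α * lam')}).toReal ≤ exp (-β) / exp (-(1 / α)) := this
      _ = exp (1 / α - β) := by rw [← exp_sub]; ring_nf
  -- Bound 2 : upper tail
  have hB : (P {ω | 1 / lam < S t ω}).toReal ≤ c / 2 := by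
    have hf_nonneg : 0 ≤ᵐ[P] fun ω => 1 - exp (-(lam * S t ω)) := by
      filter_upwards [hae] with ω hω
      have h1 : -(lam * S t ω) ≤ 0 := by nlinarith
      have := exp_le_one_iff.2 h1
      simp only [Pi.zero_apply]; linarith
    have hf_int : Integrable (fun ω => 1 - exp (-(lam * S t ω))) P :=
      (integrable_const 1).sub (hInt lam hlpos)
    have markov := mul_meas_ge_le_integral_of_nonneg hf_nonneg hf_int (1 - exp (-1))
    rw [integral_sub (integrable_const 1) (hInt lam hlpos), integral_const,
      hLap t ht lam hlpos, hflam, htρ, probReal_univ] at markov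
    simp only [ENNReal.toReal_one, one_smul] at markov
    rw [hexpρ] at markov
    have hsub : {ω | 1 / lam < S t ω} ⊆
        {ω | 1 - exp (-1) ≤ 1 - exp (-(lam * S t ω))} := by
      intro ω hω
      simp only [mem_setOf_eq] at hω ⊢
      have h1 : lam * (1 / lam) < lam * S t ω := mul_lt_mul_of_pos_left hω hlpos
      have h2 : lam * (1 / lam) = 1 := by field_simp
      rw [h2] at h1
      have : exp (-(lam * S t ω)) ≤ exp (-1 : ℝ) := exp_le_exp.2 (by linarith)
      linarith
    have hmono' : (P {ω | 1 / lam < S t ω}).toReal ≤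
        (P {ω | 1 - exp (-1) ≤ 1 - exp (-(lam * S t ω))}).toReal :=
      ENNReal.toReal_mono (measure_ne_top P _) (measure_mono hsub)
    have h1 : (1 - exp (-1)) * (P {ω | 1 / lam < S t ω}).toReal ≤ u := by
      calc (1 - exp (-1)) * (P {ω | 1 / lam < S t ω}).toReal
          ≤ (1 - exp (-1)) * (P {ω | 1 - exp (-1) ≤ 1 - exp (-(lam * S t ω))}).toReal :=
            mul_le_mul_of_nonneg_left hmono' he1'.le
        _ ≤ 1 - (1 - u) := markov
        _ = u := by ring
    have hu_eq : u = (1 - exp (-1)) * (c / 2) := by simp only [hu]; ring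
    rw [hu_eq] at h1
    exact le_of_mul_le_mul_left h1 he1'
  -- combine
  set E : Set Ω := {ω | 1 / (α * lam') ≤ S t ω ∧ S t ω ≤ 1 / lam} with hE
  have hEmeas : MeasurableSet E :=
    (measurableSet_le measurable_const (hSmeas t)).inter
      (measurableSet_le (hSmeas t) measurable_const)
  have hcomplsub : Eᶜ ⊆ {ω | S t ω < 1 / (α * lam')} ∪ {ω | 1 / lam < S t ω} := by
    intro ω hω
    simp only [hE, mem_compl_iff, mem_setOf_eq, not_and_or, not_le] at hω
    rcases hω with h | h
    · exact Or.inl h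
    · exact Or.inr h
  have hPA : P {ω | S t ω < 1 / (α * lam')} ≤ ENNReal.ofReal (exp (1 / α - β)) := by
    rw [← ENNReal.ofReal_toReal (measure_ne_top P _)]
    exact ENNReal.ofReal_le_ofReal hA
  have hPB : P {ω | 1 / lam < S t ω} ≤ ENNReal.ofReal (c / 2) := by
    rw [← ENNReal.ofReal_toReal (measure_ne_top P _)]
    exact ENNReal.ofReal_le_ofReal hB
  have hPcompl : P Eᶜ ≤ ENNReal.ofReal (1 - c / 2) := by
    calc P Eᶜ ≤ P ({ω | S t ω < 1 / (α * lam')} ∪ {ω | 1 / lam < S t ω}) :=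
          measure_mono hcomplsub
      _ ≤ P {ω | S t ω < 1 / (α * lam')} + P {ω | 1 / lam < S t ω} := measure_union_le _ _
      _ ≤ ENNReal.ofReal (exp (1 / α - β)) + ENNReal.ofReal (c / 2) := add_le_add hPA hPB
      _ = ENNReal.ofReal (exp (1 / α - β) + c / 2) :=
          (ENNReal.ofReal_add (exp_pos _).le (by positivity)).symm
      _ = ENNReal.ofReal (1 - c / 2) := by
          congr 1; simp only [hc]; ring
  have hPE : P E = 1 - P Eᶜ := by
    have := prob_compl_eq_one_sub (μ := P) hEmeas.compl
    rwa [compl_compl] at this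
  rw [hPE]
  calc ENNReal.ofReal (c / 2) = ENNReal.ofReal 1 - ENNReal.ofReal (1 - c / 2) := by
        rw [← ENNReal.ofReal_sub _ (by linarith : (0:ℝ) ≤ 1 - c / 2)]
        congr 1; ring
    _ = 1 - ENNReal.ofReal (1 - c / 2) := by rw [ENNReal.ofReal_one]
    _ ≤ 1 - P Eᶜ := tsub_le_tsub_left hPcompl 1
end

section
/- Let φ be a Bernstein function and H(λ) = φ(λ) - λφ'(λ). If there exists c ∈ (0,1) such that c·φ(λ) ≤ H(λ) ≤ φ(λ) for all λ > λ_U, then φ(λx) ≤ x^{1-c} φ(λ) for all λ > λ_U and x ≥ 1. -/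
open MeasureTheory Set Real

set_option maxHeartbeats 1000000

theorem stmt16 (μ : Measure ℝ)
    (hμ : ∫⁻ t in Ioi (0:ℝ), ENNReal.ofReal (min 1 t) ∂μ < ⊤)
    (a b : ℝ) (ha : 0 ≤ a) (hb : 0 ≤ b)
    (φ H : ℝ → ℝ)
    (hφ : ∀ l > 0, φ l = a + b * l + ∫ t in Ioi (0:ℝ), (1 - exp (-(l * t))) ∂μ)
    (hH : ∀ l > 0, H l = φ l - l * deriv φ l)
    (c lU : ℝ) (hc : c ∈ Ioo (0:ℝ) 1) (hlU : 0 ≤ lU)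
    (hcomp : ∀ l > lU, c * φ l ≤ H l ∧ H l ≤ φ l) :
    ∀ l > lU, ∀ x ≥ 1, φ (l * x) ≤ x ^ (1 - c) * φ l := by
  -- Integrability of min 1 t
  have hmin_meas : AEStronglyMeasurable (fun t : ℝ => min 1 t) (μ.restrict (Ioi 0)) :=
    (continuous_const.min continuous_id).aestronglyMeasurable
  have hmin_int : Integrable (fun t : ℝ => min 1 t) (μ.restrict (Ioi 0)) := by
    refine ⟨hmin_meas, ?_⟩
    rw [hasFiniteIntegral_iff_norm]
    have : ∀ᵐ t ∂(μ.restrict (Ioi 0)),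
        ENNReal.ofReal ‖min 1 t‖ = ENNReal.ofReal (min 1 t) := by
      filter_upwards [ae_restrict_mem measurableSet_Ioi] with t ht
      rw [Real.norm_eq_abs, abs_of_nonneg (le_min one_pos.le (le_of_lt ht))]
    rwa [lintegral_congr_ae this]
  -- A generic comparison
  have int_of_bound : ∀ (f : ℝ → ℝ) (K : ℝ), Continuous f →
      (∀ t : ℝ, 0 < t → ‖f t‖ ≤ K * min 1 t) →
      Integrable f (μ.restrict (Ioi 0)) := by
    intro f K hf hbd
    refine (hmin_int.const_mul K).mono hf.aestronglyMeasurable ?_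
    filter_upwards [ae_restrict_mem measurableSet_Ioi] with t ht
    refine (hbd t ht).trans (le_abs_self _)
  -- Differentiability of φ on (0, ∞)
  have hdiff : ∀ y : ℝ, 0 < y → DifferentiableAt ℝ φ y := by
    intro y hy
    set s : ℝ := y / 2 with hs
    have hspos : 0 < s := by positivity
    -- derivative of the integral part
    have key := hasDerivAt_integral_of_dominated_loc_of_deriv_le (μ := μ.restrict (Ioi 0))
      (F := fun l t => 1 - exp (-(l * t))) (F' := fun l t => t * exp (-(l * t)))
      (x₀ := y) (bound := fun t => t * exp (-(s * t))) (s := Metric.ball y s) (Metric.ball_mem_nhds y hspos)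
      ?_ ?_ ?_ ?_ ?_ ?_
    · obtain ⟨-, hI⟩ := key
      have heq : φ =ᶠ[nhds y] fun l => a + b * l +
          ∫ t in Ioi (0:ℝ), (1 - exp (-(l * t))) ∂μ := by
        filter_upwards [eventually_gt_nhds hy] with l hl using hφ l hl
      have : DifferentiableAt ℝ (fun l => a + b * l +
          ∫ t in Ioi (0:ℝ), (1 - exp (-(l * t))) ∂μ) y := by
        exact ((differentiableAt_const a).add ((differentiableAt_id.const_mul b))).add
          hI.differentiableAt
      exact this.congr_of_eventuallyEq heq
    · filter_upwards with l
      exact (Continuous.aestronglyMeasurable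
        (continuous_const.sub (((continuous_const.mul continuous_id).neg).rexp)))
    · refine int_of_bound _ (1 + y)
        (continuous_const.sub (((continuous_const.mul continuous_id).neg).rexp)) ?_
      intro t ht
      have h1 : 0 ≤ 1 - exp (-(y * t)) := by
        have : exp (-(y * t)) ≤ 1 := exp_le_one_iff.mpr (by nlinarith)
        linarith
      have h2 : 1 - exp (-(y * t)) ≤ y * t := by
        have := add_one_le_exp (-(y * t))
        nlinarith
      have h3 : 1 - exp (-(y * t)) ≤ 1 := by linarith [exp_pos (-(y * t))]
      rw [Real.norm_eq_abs, abs_of_nonneg h1]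
      rcases le_total t 1 with h | h
      · have : min 1 t = t := min_eq_right h
        rw [this]; nlinarith
      · have : min 1 t = 1 := min_eq_left h
        rw [this]; nlinarith
    · exact Continuous.aestronglyMeasurable
        (continuous_id.mul (((continuous_const.mul continuous_id).neg).rexp))
    · filter_upwards [ae_restrict_mem measurableSet_Ioi] with t ht l hl
      have ht0 : (0:ℝ) < t := ht
      have hls : s ≤ l := by
        have hd := Metric.mem_ball.mp hl
        rw [Real.dist_eq] at hd
        have h := abs_lt.1 hd
        rw [hs] at *
        linarith [h.1]
      have hle : exp (-(l * t)) ≤ exp (-(s * t)) := by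
        apply exp_le_exp.2; nlinarith
      rw [Real.norm_eq_abs, abs_of_nonneg (by positivity)]
      exact mul_le_mul_of_nonneg_left hle ht0.le
    · refine int_of_bound _ (1 + 1 / (s * exp 1))
        (continuous_id.mul (((continuous_const.mul continuous_id).neg).rexp)) ?_
      intro t ht
      have hpos : (0:ℝ) < s * exp 1 := by positivity
      rw [Real.norm_eq_abs, abs_of_nonneg (by positivity)]
      rcases le_total t 1 with h | h
      · have hm : min 1 t = t := min_eq_right h
        have : exp (-(s * t)) ≤ 1 := exp_le_one_iff.mpr (by nlinarith)
        rw [hm]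
        nlinarith [mul_le_mul_of_nonneg_left this ht.le, mul_pos (one_div_pos.mpr hpos) ht]
      · have hm : min 1 t = 1 := min_eq_left h
        -- t * exp (-(s*t)) ≤ 1/(s*e) since exp (s*t) ≥ e * (s*t)
        have h1 : exp (s * t) ≥ exp 1 * (s * t) := by
          have h2 : exp (s * t - 1) ≥ s * t := by
            have := add_one_le_exp (s * t - 1); linarith
          have : exp (s * t) = exp 1 * exp (s * t - 1) := by
            rw [← exp_add]; ring_nf
          rw [this]
          nlinarith [exp_pos 1]
        have hst : 0 < s * t := by nlinarith
        have h2 : exp (-(s * t)) ≤ 1 / (exp 1 * (s * t)) := by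
          rw [exp_neg, inv_eq_one_div]
          exact one_div_le_one_div_of_le (by positivity) h1
        have h3 : t * exp (-(s * t)) ≤ 1 / (s * exp 1) := by
          calc t * exp (-(s * t)) ≤ t * (1 / (exp 1 * (s * t))) :=
                mul_le_mul_of_nonneg_left h2 (by linarith)
            _ = 1 / (s * exp 1) := by field_simp
        rw [hm]; nlinarith [h3]
    · filter_upwards with t l _
      have h1 : HasDerivAt (fun l : ℝ => -(l * t)) (-t) l := by
        exact (hasDerivAt_mul_const t).neg
      have h2 := h1.exp.const_sub 1
      convert h2 using 1
      ring
  -- key derivative inequality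
  have hkey : ∀ y : ℝ, lU < y → y * deriv φ y ≤ (1 - c) * φ y := by
    intro y hy
    have hy0 : 0 < y := lt_of_le_of_lt hlU hy
    have h1 := (hcomp y hy).1
    rw [hH y hy0] at h1
    linarith
  intro l hl x hx
  have hl0 : 0 < l := lt_of_le_of_lt hlU hl
  -- the auxiliary function
  set G : ℝ → ℝ := fun u => φ (l * u) * u ^ (c - 1) with hG
  have hGderiv : ∀ u : ℝ, 1 ≤ u →
      HasDerivAt G (deriv φ (l * u) * l * u ^ (c - 1) +
        φ (l * u) * ((c - 1) * u ^ (c - 1 - 1))) u := by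
    intro u hu
    have hu0 : (0:ℝ) < u := lt_of_lt_of_le one_pos hu
    have hlu : 0 < l * u := by positivity
    have h1 : HasDerivAt (fun u : ℝ => φ (l * u)) (deriv φ (l * u) * l) u := by
      have hf : HasDerivAt (fun u : ℝ => l * u) l u := by
        simpa using (hasDerivAt_id u).const_mul l
      exact ((hdiff (l * u) hlu).hasDerivAt).comp u hf
    have h2 : HasDerivAt (fun u : ℝ => u ^ (c - 1)) ((c - 1) * u ^ (c - 1 - 1)) u :=
      Real.hasDerivAt_rpow_const (Or.inl hu0.ne')
    exact h1.mul h2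
  have hanti : AntitoneOn G (Ici 1) := by
    apply antitoneOn_of_deriv_nonpos (convex_Ici 1)
    · intro u hu
      exact (hGderiv u hu).continuousAt.continuousWithinAt
    · intro u hu
      rw [interior_Ici] at hu
      exact (hGderiv u (le_of_lt hu)).differentiableAt.differentiableWithinAt
    · intro u hu
      rw [interior_Ici] at hu
      have hu1 : 1 ≤ u := le_of_lt hu
      have hu0 : (0:ℝ) < u := lt_of_lt_of_le one_pos hu1
      rw [(hGderiv u hu1).deriv]
      have hy : lU < l * u := by nlinarith
      have hk := hkey (l * u) hy
      have hp : (0:ℝ) < u ^ (c - 1 - 1) := Real.rpow_pos_of_pos hu0 _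
      have hpow : u ^ (c - 1) = u ^ (c - 1 - 1) * u := by
        rw [← Real.rpow_add_one hu0.ne']; ring_nf
      rw [hpow]
      nlinarith [mul_le_mul_of_nonneg_left hk hp.le]
  have hGx : G x ≤ G 1 := hanti (by simp) (by simpa using hx) hx
  have hG1 : G 1 = φ l := by simp [hG]
  have hx0 : (0:ℝ) < x := lt_of_lt_of_le one_pos hx
  have hfin : φ (l * x) = G x * x ^ (1 - c) := by
    rw [hG]
    simp only
    rw [mul_assoc, ← Real.rpow_add hx0]
    norm_num
  rw [hfin]
  calc G x * x ^ (1 - c) ≤ G 1 * x ^ (1 - c) :=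
        mul_le_mul_of_nonneg_right hGx (Real.rpow_nonneg hx0.le _)
    _ = x ^ (1 - c) * φ l := by rw [hG1]; ring
end
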